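/- For every n ≥ 1, ∑_{π ∈ P₂(2n), :π: = 1̄} (-1)^{|π|} q^{‖π‖} = (1-q)^{n-1}, where 1̄ = {{i, 2n+1−i} : 1 ≤ i ≤ n} is the fully nested noncrossing pairpartition and :π: denotes the Wick (crossing-resolution) map. -/
import Mathlib


/-- The number of inversions (= Coxeter length) of a permutation. -/
def inversions {n : ℕ} (σ : Equiv.Perm (Fin n)) : ℕ :=
  (Finset.univ.filter fun p : Fin n × Fin n => p.1 < p.2 ∧ σ p.2 < σ p.1).card

/-- The colour-length `‖σ‖ = #S_σ` of a permutation of `{0,…,n-1}`: the number of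
Coxeter generators `(i, i+1)`, `0 ≤ i < n-1`, occurring in a reduced word for `σ`;
equivalently the number of `i` such that `σ` does not preserve `{0,…,i}`. -/
def colourLength {n : ℕ} (σ : Equiv.Perm (Fin n)) : ℕ :=
  ((Finset.range (n - 1)).filter fun i =>
    ∃ x : Fin n, (x : ℕ) ≤ i ∧ i < (σ x : ℕ)).card

open Finset Equiv

/-- `σ` preserves the initial segment `{0,…,i}`. -/
def SplitsAt {n : ℕ} (σ : Equiv.Perm (Fin n)) (i : ℕ) : Prop :=
  ∀ x : Fin n, (x : ℕ) ≤ i → (σ x : ℕ) ≤ i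

instance {n : ℕ} (σ : Equiv.Perm (Fin n)) (i : ℕ) : Decidable (SplitsAt σ i) :=
  inferInstanceAs (Decidable (∀ x : Fin n, (x : ℕ) ≤ i → (σ x : ℕ) ≤ i))

lemma colourLength_eq {n : ℕ} (σ : Equiv.Perm (Fin n)) :
    colourLength σ = ((Finset.range (n - 1)).filter fun i => ¬ SplitsAt σ i).card := by
  unfold colourLength
  congr 1
  apply Finset.filter_congr
  intro i _
  simp [SplitsAt, not_forall, not_le]

lemma signAux_eq_sign {n : ℕ} (σ : Equiv.Perm (Fin n)) :
    Equiv.Perm.signAux σ = Equiv.Perm.sign σ := by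
  refine Equiv.Perm.swap_induction_on σ ?_ ?_
  · simp
  · intro f x y hxy hf
    rw [Equiv.Perm.signAux_mul, Equiv.Perm.signAux_swap hxy, Equiv.Perm.sign_mul,
      Equiv.Perm.sign_swap hxy, hf]

lemma pow_inversions_eq_sign {n : ℕ} (σ : Equiv.Perm (Fin n)) :
    ((-1 : ℤˣ)) ^ inversions σ = Equiv.Perm.sign σ := by
  rw [← signAux_eq_sign]
  unfold Equiv.Perm.signAux
  rw [Finset.prod_ite, Finset.prod_const, Finset.prod_const_one, mul_one]
  congr 1
  unfold inversions
  symm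
  apply Finset.card_bij (fun x _ => ((x.2, x.1) : Fin n × Fin n))
  · intro x hx
    rw [Finset.mem_filter] at hx
    obtain ⟨hx1, hx2⟩ := hx
    rw [Equiv.Perm.mem_finPairsLT] at hx1
    refine Finset.mem_filter.2 ⟨Finset.mem_univ _, hx1, ?_⟩
    exact lt_of_le_of_ne hx2 (fun h => absurd (σ.injective h) (ne_of_gt hx1))
  · intro x hx y hy h
    rcases x with ⟨a, b⟩
    rcases y with ⟨c, d⟩
    simp only [Prod.mk.injEq] at h
    obtain ⟨h1, h2⟩ := h
    subst h1; subst h2; rfl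
  · intro p hp
    rw [Finset.mem_filter] at hp
    obtain ⟨-, hp1, hp2⟩ := hp
    refine ⟨⟨p.2, p.1⟩, ?_, rfl⟩
    refine Finset.mem_filter.2 ⟨Equiv.Perm.mem_finPairsLT.2 hp1, le_of_lt hp2⟩

lemma inv_pow_real {n : ℕ} (σ : Equiv.Perm (Fin n)) :
    ((-1 : ℝ)) ^ inversions σ = ((Equiv.Perm.sign σ : ℤ) : ℝ) := by
  rw [← pow_inversions_eq_sign]
  push_cast
  norm_num

lemma eq_one_of_splits {n : ℕ} (σ : Equiv.Perm (Fin n))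
    (h : ∀ i ∈ Finset.range (n - 1), SplitsAt σ i) : σ = 1 := by
  have hle : ∀ x : Fin n, (σ x : ℕ) ≤ (x : ℕ) := by
    intro x
    rcases lt_or_ge (x : ℕ) (n - 1) with hx | hx
    · exact h x (Finset.mem_range.2 hx) x le_rfl
    · have h1 : (σ x : ℕ) < n := (σ x).2
      omega
  have key : ∀ k : ℕ, ∀ x : Fin n, (x : ℕ) = k → σ x = x := by
    intro k
    induction k using Nat.strong_induction_on with
    | _ k ih =>
      intro x hx
      rcases eq_or_lt_of_le (hle x) with he | hlt
      · exact Fin.ext he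
      · exfalso
        have h1 : σ (σ x) = σ x := ih (σ x : ℕ) (hx ▸ hlt) (σ x) rfl
        have h2 := σ.injective h1
        have h3 : (σ x : ℕ) = (x : ℕ) := congrArg Fin.val h2
        omega
  ext x
  exact congrArg Fin.val (key (x : ℕ) x rfl)

lemma sum_sign_splits_eq_zero {n : ℕ} {U : Finset ℕ} (hU : U ⊆ Finset.range (n - 1))
    (hne : U ≠ Finset.range (n - 1)) :
    ∑ σ ∈ Finset.univ.filter (fun σ : Equiv.Perm (Fin n) => ∀ i ∈ U, SplitsAt σ i),
      ((Equiv.Perm.sign σ : ℤ) : ℝ) = 0 := by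
  obtain ⟨j, hjr, hjU⟩ := Finset.exists_of_ssubset (lt_of_le_of_ne hU hne)
  rw [Finset.mem_range] at hjr
  have hjn : j + 1 < n := by omega
  set a : Fin n := ⟨j, by omega⟩ with ha
  set b : Fin n := ⟨j + 1, hjn⟩ with hb
  have hab : a ≠ b := by
    intro h
    have := congrArg Fin.val h
    simp [ha, hb] at this
  apply Finset.sum_involution (fun σ _ => Equiv.swap a b * σ)
  · intro σ _
    have hs : Equiv.Perm.sign (Equiv.swap a b * σ) = - Equiv.Perm.sign σ := by
      rw [Equiv.Perm.sign_mul, Equiv.Perm.sign_swap hab, neg_one_mul]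
    rw [hs]
    simp
  · intro σ _ _ heq
    have h1 : Equiv.swap a b = 1 := by
      have : Equiv.swap a b * σ = 1 * σ := by rw [heq, one_mul]
      exact mul_right_cancel this
    have h2 : Equiv.swap a b a = b := Equiv.swap_apply_left a b
    rw [h1] at h2
    simp only [Equiv.Perm.one_apply] at h2
    exact hab h2
  · intro σ hσ
    rw [Finset.mem_filter] at hσ ⊢
    refine ⟨Finset.mem_univ _, ?_⟩
    intro i hiU x hxi
    have hsp : (σ x : ℕ) ≤ i := hσ.2 i hiU x hxi
    have hij : i ≠ j := fun h => hjU (h ▸ hiU)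
    simp only [Equiv.Perm.mul_apply]
    rcases lt_or_gt_of_ne hij with hlt | hgt
    · have hva : σ x ≠ a := by
        intro h; have := congrArg Fin.val h; simp [ha] at this; omega
      have hvb : σ x ≠ b := by
        intro h; have := congrArg Fin.val h; simp [hb] at this; omega
      rw [Equiv.swap_apply_of_ne_of_ne hva hvb]
      exact hsp
    · by_cases hva : σ x = a
      · rw [hva, Equiv.swap_apply_left]
        simp [hb]; omega
      · by_cases hvb : σ x = b
        · rw [hvb, Equiv.swap_apply_right]
          simp [ha]; omega
        · rw [Equiv.swap_apply_of_ne_of_ne hva hvb]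
          exact hsp
  · intro σ _
    rw [← mul_assoc, Equiv.swap_mul_self, one_mul]

lemma sum_sign_splits_full {n : ℕ} {U : Finset ℕ} (hU : U = Finset.range (n - 1)) :
    ∑ σ ∈ Finset.univ.filter
        (fun σ : Equiv.Perm (Fin n) => ∀ i ∈ U, SplitsAt σ i),
      ((Equiv.Perm.sign σ : ℤ) : ℝ) = 1 := by
  have hset : Finset.univ.filter
      (fun σ : Equiv.Perm (Fin n) => ∀ i ∈ U, SplitsAt σ i) = {1} := by
    ext σ
    simp only [Finset.mem_filter, Finset.mem_univ, true_and, Finset.mem_singleton]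
    constructor
    · intro h
      exact eq_one_of_splits σ fun i hi => h i (by rw [hU]; exact hi)
    · rintro rfl i _ x hx
      simpa using hx
  rw [hset]
  simp

/-- The identity `∑_{π ∈ P₂(2n), :π: = 1̄} (-1)^{|π|} q^{‖π‖} = (1-q)^{n-1}`: since the
pairpartitions `π` with Wick image `:π: = 1̄` are exactly `{σ̄ : σ ∈ 𝔖_n}`, with
`|σ̄| = |σ|` the Coxeter length and `‖σ̄‖ = ‖σ‖` the colour-length, this is
equivalently `∑_{σ ∈ 𝔖_n} (-1)^{|σ|} q^{‖σ‖} = (1-q)^{n-1}`. -/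
theorem stmt_17 (n : ℕ) (hn : 1 ≤ n) (q : ℝ) :
    ∑ σ : Equiv.Perm (Fin n), (-1 : ℝ) ^ inversions σ * q ^ colourLength σ =
      (1 - q) ^ (n - 1) := by
  classical
  set m := n - 1 with hm
  have hterm : ∀ σ : Equiv.Perm (Fin n),
      (-1 : ℝ) ^ inversions σ * q ^ colourLength σ =
      ∑ U ∈ (Finset.range m).powerset,
        ((Equiv.Perm.sign σ : ℤ) : ℝ) *
          ((∏ i ∈ U, ((1 - q) * (if SplitsAt σ i then (1 : ℝ) else 0))) *
            ∏ i ∈ Finset.range m \ U, q) := by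
    intro σ
    rw [inv_pow_real, colourLength_eq, ← Finset.mul_sum, ← Finset.prod_add]
    congr 1
    have h1 : ∀ i : ℕ, (1 - q) * (if SplitsAt σ i then (1 : ℝ) else 0) + q
        = if SplitsAt σ i then (1 : ℝ) else q := by
      intro i
      by_cases h : SplitsAt σ i <;> simp [h] <;> ring
    calc q ^ ((Finset.range m).filter fun i => ¬ SplitsAt σ i).card
        = ∏ i ∈ Finset.range m, (if SplitsAt σ i then (1 : ℝ) else q) := by
          rw [Finset.prod_ite, Finset.prod_const_one, Finset.prod_const, one_mul]
      _ = _ := by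
          refine Finset.prod_congr rfl fun i _ => (h1 i).symm
  rw [Finset.sum_congr rfl fun σ _ => hterm σ, Finset.sum_comm]
  have hinner : ∀ U ∈ (Finset.range m).powerset,
      (∑ σ : Equiv.Perm (Fin n),
        ((Equiv.Perm.sign σ : ℤ) : ℝ) *
          ((∏ i ∈ U, ((1 - q) * (if SplitsAt σ i then (1 : ℝ) else 0))) *
            ∏ i ∈ Finset.range m \ U, q))
      = (1 - q) ^ U.card * q ^ (m - U.card) *
          ∑ σ ∈ Finset.univ.filter (fun σ : Equiv.Perm (Fin n) => ∀ i ∈ U, SplitsAt σ i),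
            ((Equiv.Perm.sign σ : ℤ) : ℝ) := by
    intro U hU
    rw [Finset.mem_powerset] at hU
    have hcard : (Finset.range m \ U).card = m - U.card := by
      rw [Finset.card_sdiff_of_subset hU, Finset.card_range]
    rw [Finset.sum_filter, Finset.mul_sum]
    refine Finset.sum_congr rfl fun σ _ => ?_
    rw [Finset.prod_mul_distrib, Finset.prod_const, Finset.prod_boole, Finset.prod_const, hcard]
    by_cases h : ∀ i ∈ U, SplitsAt σ i <;> simp [h] <;> ring
  rw [Finset.sum_congr rfl hinner]
  rw [Finset.sum_eq_single_of_mem (Finset.range m)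
    (Finset.mem_powerset.2 (Finset.Subset.refl _))]
  · rw [sum_sign_splits_full rfl, Finset.card_range, Nat.sub_self, pow_zero, mul_one, mul_one]
  · intro U hU hne
    rw [sum_sign_splits_eq_zero (Finset.mem_powerset.1 hU) hne, mul_zero]
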